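/- (Sufficient-decrease inequality in the proof of Theorem 2.) Assume each f_i is convex, the δ-similarity condition holds, and 0 < η ≤ min(1/(8nL), 1/(8n²δ)). Fix any permutation π of {1,…,n} and any point w_s ∈ ℝ^d, and let w_{s+1} be the output of a SARAH epoch with step size η, permutation π, start point w_s and initial direction ∇P(w_s). Then P(w_{s+1}) ≤ P(w_s) − (η(n+1)/4)·‖∇P(w_s)‖². -/

import Mathlib

open scoped BigOperators
open scoped RealInnerProductSpace

set_option maxHeartbeats 1000000

lemma descent_lemma {E : Type*} [NormedAddCommGroup E] [InnerProductSpace ℝ E]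
    [CompleteSpace E] (φ : E → ℝ) (G : E → E) (hG : ∀ x, HasGradientAt φ (G x) x)
    (L : ℝ) (hL : 0 ≤ L) (hlip : ∀ x y, ‖G x - G y‖ ≤ L * ‖x - y‖) (x y : E) :
    φ y ≤ φ x + ⟪G x, y - x⟫ + L / 2 * ‖y - x‖ ^ 2 := by
  set u := y - x with hu
  have hGc : Continuous G := by
    have : LipschitzWith L.toNNReal G := by
      apply LipschitzWith.of_dist_le_mul
      intro a b
      simpa [dist_eq_norm, Real.coe_toNNReal L hL] using hlip a b
    exact this.continuous
  have hline : Continuous fun t : ℝ => x + t • u := by continuity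
  have hd : ∀ t : ℝ, HasDerivAt (fun t : ℝ => φ (x + t • u)) ⟪G (x + t • u), u⟫ t := by
    intro t
    have h1 : HasFDerivAt φ ((InnerProductSpace.toDual ℝ E) (G (x + t • u))) (x + t • u) :=
      hasGradientAt_iff_hasFDerivAt.1 (hG _)
    have h2 : HasDerivAt (fun t : ℝ => x + t • u) u t := by
      simpa using ((hasDerivAt_id t).smul_const u).const_add x
    have h3 := h1.comp_hasDerivAt t h2
    simp only [Function.comp_def, InnerProductSpace.toDual_apply_apply] at h3
    exact h3
  have hic : Continuous fun t : ℝ => ⟪G (x + t • u), u⟫ :=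
    (hGc.comp hline).inner continuous_const
  have hftc : ∫ t in (0:ℝ)..1, ⟪G (x + t • u), u⟫ = φ y - φ x := by
    have := intervalIntegral.integral_eq_sub_of_hasDerivAt (f := fun t : ℝ => φ (x + t • u))
      (f' := fun t : ℝ => ⟪G (x + t • u), u⟫) (a := 0) (b := 1)
      (fun t _ => hd t) (hic.intervalIntegrable 0 1)
    simpa [hu] using this
  have hmono : ∫ t in (0:ℝ)..1, ⟪G (x + t • u), u⟫
      ≤ ∫ t in (0:ℝ)..1, (⟪G x, u⟫ + L * t * ‖u‖ ^ 2) := by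
    apply intervalIntegral.integral_mono_on (by norm_num) (hic.intervalIntegrable 0 1)
      ((by continuity : Continuous fun t : ℝ => ⟪G x, u⟫ + L * t * ‖u‖ ^ 2).intervalIntegrable 0 1)
    intro t ht
    have h1 : ⟪G (x + t • u) - G x, u⟫ ≤ ‖G (x + t • u) - G x‖ * ‖u‖ :=
      real_inner_le_norm _ _
    have h2 : ‖G (x + t • u) - G x‖ ≤ L * (t * ‖u‖) := by
      have := hlip (x + t • u) x
      simpa [norm_smul, abs_of_nonneg ht.1, mul_assoc] using this
    have h3 : ⟪G (x + t • u) - G x, u⟫ ≤ L * t * ‖u‖ ^ 2 := by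
      calc ⟪G (x + t • u) - G x, u⟫ ≤ ‖G (x + t • u) - G x‖ * ‖u‖ := h1
        _ ≤ L * (t * ‖u‖) * ‖u‖ := by
            exact mul_le_mul_of_nonneg_right h2 (norm_nonneg u)
        _ = L * t * ‖u‖ ^ 2 := by ring
    have := inner_sub_left (𝕜 := ℝ) (G (x + t • u)) (G x) u
    linarith [h3, this.symm.le, this.le]
  have hval : ∫ t in (0:ℝ)..1, (⟪G x, u⟫ + L * t * ‖u‖ ^ 2)
      = ⟪G x, u⟫ + L / 2 * ‖u‖ ^ 2 := by
    rw [intervalIntegral.integral_add ((by continuity : Continuous fun _ : ℝ => (⟪G x, u⟫ : ℝ)).intervalIntegrable 0 1)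
      ((by continuity : Continuous fun t : ℝ => L * t * ‖u‖ ^ 2).intervalIntegrable 0 1)]
    have : ∫ t in (0:ℝ)..1, L * t * ‖u‖ ^ 2 = L / 2 * ‖u‖ ^ 2 := by
      have h : ∫ t in (0:ℝ)..1, L * t * ‖u‖ ^ 2 = L * ‖u‖ ^ 2 * ∫ t in (0:ℝ)..1, t := by
        rw [← intervalIntegral.integral_const_mul]
        congr 1; ext t; ring
      rw [h, integral_id]; ring
    simp [this]
  linarith [hftc.symm.le, hftc.le, hmono, hval.le, hval.symm.le]

/-- Sufficient-decrease inequality in the proof of Theorem 2. -/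
theorem rr_sarah_sufficient_decrease
    {d n : ℕ} (hd : 1 ≤ d) (hn : 1 ≤ n)
    (f : Fin n → EuclideanSpace ℝ (Fin d) → ℝ)
    (P : EuclideanSpace ℝ (Fin d) → ℝ)
    (hP : ∀ w, P w = (1 / (n : ℝ)) * ∑ i, f i w)
    (L δ η : ℝ) (hL : 0 < L) (hδ : 0 < δ)
    (hdiff : ∀ i, Differentiable ℝ (f i))
    (hconv : ∀ i, ConvexOn ℝ Set.univ (f i))
    (hLip : ∀ i w₁ w₂, ‖gradient (f i) w₁ - gradient (f i) w₂‖ ≤ L * ‖w₁ - w₂‖)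
    (hsim : ∀ i w₁ w₂,
      ‖(gradient (f i) w₁ - gradient P w₁) - (gradient (f i) w₂ - gradient P w₂)‖
        ≤ (δ / 2) * ‖w₁ - w₂‖)
    (hη0 : 0 < η)
    (hη : η ≤ min (1 / (8 * n * L)) (1 / (8 * n ^ 2 * δ)))
    (π : Equiv.Perm (Fin n))
    (ws : EuclideanSpace ℝ (Fin d))
    -- one SARAH epoch: start point `ws`, initial direction `∇P(ws)`, permutation `π`
    (W V : ℕ → EuclideanSpace ℝ (Fin d))
    (hW0 : W 0 = ws) (hV0 : V 0 = gradient P ws)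
    (hWrec : ∀ i : Fin n, W ((i : ℕ) + 1) = W i - η • V i)
    (hVrec : ∀ i : Fin n, V ((i : ℕ) + 1)
      = V i + gradient (f (π i)) (W ((i : ℕ) + 1)) - gradient (f (π i)) (W i))
    (wnext : EuclideanSpace ℝ (Fin d)) (hwnext : wnext = W n - η • V n) :
    P wnext ≤ P ws - (η * ((n : ℝ) + 1) / 4) * ‖gradient P ws‖ ^ 2 := by
  have hn0 : (0:ℝ) < n := by exact_mod_cast hn
  have hn1 : (1:ℝ) ≤ n := by exact_mod_cast hn
  -- gradient of P
  have hPg : ∀ x, HasGradientAt P ((1 / (n:ℝ)) • ∑ i, gradient (f i) x) x := by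
    intro x
    have hsum : HasFDerivAt (fun w => ∑ i, f i w)
        (∑ i, (InnerProductSpace.toDual ℝ _) (gradient (f i) x)) x :=
      HasFDerivAt.fun_sum (fun i _ => hasGradientAt_iff_hasFDerivAt.1 ((hdiff i x).hasGradientAt))
    have h2 := hsum.const_mul (1 / (n:ℝ))
    have h3 : HasGradientAt (fun w => (1/(n:ℝ)) * ∑ i, f i w)
        ((1/(n:ℝ)) • ∑ i, gradient (f i) x) x := by
      rw [hasGradientAt_iff_hasFDerivAt]
      convert h2 using 1
      · rfl
      · rw [map_smul, map_sum]
    exact h3.congr_of_eventuallyEq (Filter.Eventually.of_forall hP)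
  have gradP : ∀ x, gradient P x = (1/(n:ℝ)) • ∑ i, gradient (f i) x :=
    fun x => (hPg x).gradient
  have hPg' : ∀ x, HasGradientAt P (gradient P x) x := fun x => (gradP x) ▸ hPg x
  -- Lipschitzness of ∇P
  have hPLip : ∀ x y, ‖gradient P x - gradient P y‖ ≤ L * ‖x - y‖ := by
    intro x y
    rw [gradP, gradP, ← smul_sub, ← Finset.sum_sub_distrib, norm_smul]
    have h1 : ‖∑ i, (gradient (f i) x - gradient (f i) y)‖ ≤ (n:ℝ) * (L * ‖x - y‖) := by
      calc ‖∑ i, (gradient (f i) x - gradient (f i) y)‖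
          ≤ ∑ i, ‖gradient (f i) x - gradient (f i) y‖ := norm_sum_le _ _
        _ ≤ ∑ _i : Fin n, L * ‖x - y‖ := Finset.sum_le_sum (fun i _ => hLip i x y)
        _ = (n:ℝ) * (L * ‖x - y‖) := by
            simp [Finset.sum_const, Finset.card_univ, nsmul_eq_mul]
    have hnn : ‖(1/(n:ℝ))‖ = 1/(n:ℝ) := by
      rw [Real.norm_eq_abs, abs_of_pos (by positivity)]
    rw [hnn]
    have h2 := mul_le_mul_of_nonneg_left h1 (by positivity : (0:ℝ) ≤ 1/(n:ℝ))
    have hne : (n:ℝ) ≠ 0 := ne_of_gt hn0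
    calc (1/(n:ℝ)) * ‖∑ i, (gradient (f i) x - gradient (f i) y)‖
        ≤ (1/(n:ℝ)) * ((n:ℝ) * (L * ‖x - y‖)) := h2
      _ = L * ‖x - y‖ := by field_simp
  set g := gradient P ws with hg
  clear_value g
  set A := ‖g‖ with hA
  clear_value A
  have hA0 : (0:ℝ) ≤ A := hA ▸ norm_nonneg _
  -- numeric step-size bounds
  have hη1 : η ≤ 1/(8*(n:ℝ)*L) := le_trans hη (min_le_left _ _)
  have hη2 : η ≤ 1/(8*(n:ℝ)^2*δ) := le_trans hη (min_le_right _ _)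
  have hLn : L * η * (n:ℝ) ≤ 1/8 := by
    have h1 : η * (8*(n:ℝ)*L) ≤ 1 := by
      rw [le_div_iff₀ (by positivity)] at hη1; exact hη1
    nlinarith
  have hδn : δ * η * (n:ℝ) ≤ 1/8 := by
    have h1 : η * (8*(n:ℝ)^2*δ) ≤ 1 := by
      rw [le_div_iff₀ (by positivity)] at hη2; exact hη2
    nlinarith [mul_pos hδ hη0, hn0, hn1, mul_nonneg (mul_nonneg hδ.le hη0.le) hn0.le]
  -- main induction
  have key : ∀ i : ℕ, i ≤ n →
      ‖W i - ws‖ ≤ 2*η*(i:ℝ)*A ∧ ‖V i - gradient P (W i)‖ ≤ δ*η*(i:ℝ)*A ∧ ‖V i‖ ≤ 11/8*A := by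
    intro i
    induction i with
    | zero =>
      intro _
      refine ⟨?_, ?_, ?_⟩
      · simp [hW0]
      · simp [hW0, hV0, ← hg]
      · rw [hV0, ← hA]; linarith
    | succ i ih =>
      intro h
      have hi : i < n := h
      obtain ⟨IHa, IHb, IHc⟩ := ih (Nat.le_of_succ_le h)
      have hWr : W (i+1) = W i - η • V i := hWrec ⟨i, hi⟩
      have hVr : V (i+1) = V i + gradient (f (π ⟨i, hi⟩)) (W (i+1))
          - gradient (f (π ⟨i, hi⟩)) (W i) := hVrec ⟨i, hi⟩
      have hVi : ‖η • V i‖ ≤ η * (11/8*A) := by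
        rw [norm_smul, Real.norm_eq_abs, abs_of_pos hη0]
        exact mul_le_mul_of_nonneg_left IHc hη0.le
      have hnormstep : ‖W (i+1) - W i‖ ≤ η * (11/8*A) := by
        have e : W (i+1) - W i = -(η • V i) := by rw [hWr]; abel
        rw [e, norm_neg]; exact hVi
      have ha' : ‖W (i+1) - ws‖ ≤ 2*η*((i:ℝ)+1)*A := by
        have e : W (i+1) - ws = (W i - ws) - η • V i := by rw [hWr]; abel
        calc ‖W (i+1) - ws‖ = ‖(W i - ws) - η • V i‖ := by rw [e]
          _ ≤ ‖W i - ws‖ + ‖η • V i‖ := norm_sub_le _ _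
          _ ≤ 2*η*(i:ℝ)*A + η * (11/8*A) := add_le_add IHa hVi
          _ ≤ 2*η*((i:ℝ)+1)*A := by nlinarith [hη0.le, hA0, mul_nonneg hη0.le hA0]
      have hb' : ‖V (i+1) - gradient P (W (i+1))‖ ≤ δ*η*((i:ℝ)+1)*A := by
        have e : V (i+1) - gradient P (W (i+1)) = (V i - gradient P (W i))
            + ((gradient (f (π ⟨i, hi⟩)) (W (i+1)) - gradient P (W (i+1)))
              - (gradient (f (π ⟨i, hi⟩)) (W i) - gradient P (W i))) := by
          rw [hVr]; abel
        calc ‖V (i+1) - gradient P (W (i+1))‖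
            ≤ ‖V i - gradient P (W i)‖
              + ‖(gradient (f (π ⟨i, hi⟩)) (W (i+1)) - gradient P (W (i+1)))
                - (gradient (f (π ⟨i, hi⟩)) (W i) - gradient P (W i))‖ := by
              rw [e]; exact norm_add_le _ _
          _ ≤ δ*η*(i:ℝ)*A + (δ/2) * ‖W (i+1) - W i‖ :=
              add_le_add IHb (hsim _ _ _)
          _ ≤ δ*η*(i:ℝ)*A + (δ/2) * (η * (11/8*A)) := by
              have := mul_le_mul_of_nonneg_left hnormstep (by positivity : (0:ℝ) ≤ δ/2)
              linarith
          _ ≤ δ*η*((i:ℝ)+1)*A := by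
              nlinarith [mul_nonneg (mul_nonneg hδ.le hη0.le) hA0]
      have hc' : ‖V (i+1)‖ ≤ 11/8*A := by
        have h1 : ‖gradient P (W (i+1)) - g‖ ≤ L * ‖W (i+1) - ws‖ := by
          rw [hg]; exact hPLip _ _
        have h2 : (i:ℝ)+1 ≤ (n:ℝ) := by exact_mod_cast h
        have e1 : δ*η*((i:ℝ)+1) ≤ 1/8 :=
          le_trans (mul_le_mul_of_nonneg_left h2 (mul_nonneg hδ.le hη0.le)) hδn
        have e2 : L*η*((i:ℝ)+1) ≤ 1/8 :=
          le_trans (mul_le_mul_of_nonneg_left h2 (mul_nonneg hL.le hη0.le)) hLn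
        have hdecomp : V (i+1) = (V (i+1) - gradient P (W (i+1)))
            + (gradient P (W (i+1)) - g) + g := by abel
        calc ‖V (i+1)‖
            = ‖(V (i+1) - gradient P (W (i+1))) + (gradient P (W (i+1)) - g) + g‖ := by
              conv_lhs => rw [hdecomp]
          _ ≤ ‖V (i+1) - gradient P (W (i+1))‖ + ‖gradient P (W (i+1)) - g‖ + ‖g‖ :=
              norm_add₃_le
          _ ≤ δ*η*((i:ℝ)+1)*A + L*(2*η*((i:ℝ)+1)*A) + A := by
              refine add_le_add (add_le_add hb' ?_) (le_of_eq hA.symm)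
              exact h1.trans (mul_le_mul_of_nonneg_left ha' hL.le)
          _ ≤ 11/8*A := by
              nlinarith [mul_le_mul_of_nonneg_right e1 hA0,
                mul_le_mul_of_nonneg_right e2 hA0]
      exact ⟨by push_cast; exact ha', by push_cast; exact hb', hc'⟩
  -- distance of V i from g
  have hVg : ∀ i : ℕ, i ≤ n → ‖V i - g‖ ≤ 3/8*A := by
    intro i hi
    obtain ⟨ka, kb, kc⟩ := key i hi
    have h1 : ‖gradient P (W i) - g‖ ≤ L * ‖W i - ws‖ := by
      rw [hg]; exact hPLip _ _
    have h2 : (i:ℝ) ≤ (n:ℝ) := by exact_mod_cast hi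
    have e1 : δ*η*(i:ℝ) ≤ 1/8 :=
      le_trans (mul_le_mul_of_nonneg_left h2 (mul_nonneg hδ.le hη0.le)) hδn
    have e2 : L*η*(i:ℝ) ≤ 1/8 :=
      le_trans (mul_le_mul_of_nonneg_left h2 (mul_nonneg hL.le hη0.le)) hLn
    have hdecomp : V i - g = (V i - gradient P (W i)) + (gradient P (W i) - g) := by abel
    calc ‖V i - g‖ ≤ ‖V i - gradient P (W i)‖ + ‖gradient P (W i) - g‖ := by
          rw [hdecomp]; exact norm_add_le _ _
      _ ≤ δ*η*(i:ℝ)*A + L*(2*η*(i:ℝ)*A) :=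
          add_le_add kb (h1.trans (mul_le_mul_of_nonneg_left ka hL.le))
      _ ≤ 3/8*A := by
          nlinarith [mul_le_mul_of_nonneg_right e1 hA0, mul_le_mul_of_nonneg_right e2 hA0]
  -- W as partial sums of V
  have hWs : ∀ i : ℕ, i ≤ n → W i = ws - η • ∑ j ∈ Finset.range i, V j := by
    intro i
    induction i with
    | zero => intro _; simp [hW0]
    | succ i ih =>
      intro h
      have hi : i < n := h
      have hWr : W (i+1) = W i - η • V i := hWrec ⟨i, hi⟩
      rw [hWr, ih (Nat.le_of_succ_le h), Finset.sum_range_succ, smul_add]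
      abel
  set S := ∑ j ∈ Finset.range (n+1), V j with hS
  clear_value S
  have hwnext2 : wnext = ws - η • S := by
    rw [hwnext, hWs n le_rfl, hS, Finset.sum_range_succ, smul_add]; abel
  have hB0 : (0:ℝ) < (n:ℝ)+1 := by positivity
  have hSnorm : ‖S‖ ≤ ((n:ℝ)+1) * (11/8*A) := by
    rw [hS]
    calc ‖∑ j ∈ Finset.range (n+1), V j‖ ≤ ∑ j ∈ Finset.range (n+1), ‖V j‖ := norm_sum_le _ _
      _ ≤ ∑ _j ∈ Finset.range (n+1), (11/8*A) :=
          Finset.sum_le_sum (fun j hj =>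
            (key j (Nat.lt_succ_iff.1 (Finset.mem_range.1 hj))).2.2)
      _ = ((n:ℝ)+1) * (11/8*A) := by
          rw [Finset.sum_const, Finset.card_range, nsmul_eq_mul]; push_cast; ring
  have hSg : ‖S - ((n:ℝ)+1) • g‖ ≤ ((n:ℝ)+1) * (3/8*A) := by
    have h1 : ((n:ℝ)+1) • g = ∑ _j ∈ Finset.range (n+1), g := by
      rw [Finset.sum_const, Finset.card_range, ← Nat.cast_smul_eq_nsmul ℝ]
      norm_cast
    rw [h1, hS, ← Finset.sum_sub_distrib]
    calc ‖∑ j ∈ Finset.range (n+1), (V j - g)‖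
        ≤ ∑ j ∈ Finset.range (n+1), ‖V j - g‖ := norm_sum_le _ _
      _ ≤ ∑ _j ∈ Finset.range (n+1), (3/8*A) :=
          Finset.sum_le_sum (fun j hj =>
            hVg j (Nat.lt_succ_iff.1 (Finset.mem_range.1 hj)))
      _ = ((n:ℝ)+1) * (3/8*A) := by
          rw [Finset.sum_const, Finset.card_range, nsmul_eq_mul]; push_cast; ring
  have hinner : (5/8)*(((n:ℝ)+1))*A^2 ≤ ⟪g, S⟫ := by
    have hrep : S = ((n:ℝ)+1) • g + (S - ((n:ℝ)+1) • g) := by abel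
    have h1 : ⟪g, S⟫ = ((n:ℝ)+1)*A^2 + ⟪g, S - ((n:ℝ)+1) • g⟫ := by
      conv_lhs => rw [hrep]
      rw [inner_add_right, real_inner_smul_right, real_inner_self_eq_norm_sq, ← hA]
    have h2 : |⟪g, S - ((n:ℝ)+1) • g⟫| ≤ A * (((n:ℝ)+1) * (3/8*A)) := by
      refine le_trans (abs_real_inner_le_norm _ _) ?_
      rw [← hA]
      exact mul_le_mul_of_nonneg_left hSg hA0
    have h3 := neg_abs_le ⟪g, S - ((n:ℝ)+1) • g⟫
    rw [h1]; nlinarith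
  -- descent step
  have hdesc := descent_lemma P (gradient P) hPg' L hL.le hPLip ws wnext
  have hsub : wnext - ws = -(η • S) := by rw [hwnext2]; abel
  rw [hsub] at hdesc
  have hIP : ⟪gradient P ws, -(η • S)⟫ = -(η * ⟪g, S⟫) := by
    rw [inner_neg_right, real_inner_smul_right, hg]
  have hnrm : ‖-(η • S)‖ = η * ‖S‖ := by
    rw [norm_neg, norm_smul, Real.norm_eq_abs, abs_of_pos hη0]
  rw [hIP, hnrm] at hdesc
  -- final arithmetic
  have hLB : L*η*((n:ℝ)+1) ≤ 1/4 := by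
    nlinarith [hLn, mul_pos hL hη0, hn1]
  have hs0 : (0:ℝ) ≤ ‖S‖ := norm_nonneg _
  have hSsq : ‖S‖^2 ≤ (((n:ℝ)+1)*(11/8*A))^2 := by nlinarith [hSnorm, hs0]
  have t1 : η * ((5/8)*(((n:ℝ)+1))*A^2) ≤ η * ⟪g, S⟫ :=
    mul_le_mul_of_nonneg_left hinner hη0.le
  have t2 : L/2 * (η*‖S‖)^2 ≤ (3/8)*η*((n:ℝ)+1)*A^2 := by
    have e2 : η^2*‖S‖^2 ≤ η^2 * (((n:ℝ)+1)*(11/8*A))^2 :=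
      mul_le_mul_of_nonneg_left hSsq (sq_nonneg η)
    have e4 : (L*η*((n:ℝ)+1))*((η*((n:ℝ)+1))*A^2) ≤ (1/4)*((η*((n:ℝ)+1))*A^2) :=
      mul_le_mul_of_nonneg_right hLB (by positivity)
    have e5 : (0:ℝ) ≤ (η*((n:ℝ)+1))*A^2 := by positivity
    calc L/2 * (η*‖S‖)^2 = L/2 * (η^2*‖S‖^2) := by ring
      _ ≤ L/2 * (η^2 * (((n:ℝ)+1)*(11/8*A))^2) :=
          mul_le_mul_of_nonneg_left e2 (by positivity)
      _ = (L*η*((n:ℝ)+1))*((η*((n:ℝ)+1))*A^2)*(121/128) := by ring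
      _ ≤ (1/4)*((η*((n:ℝ)+1))*A^2)*(121/128) :=
          mul_le_mul_of_nonneg_right e4 (by norm_num)
      _ ≤ (3/8)*η*((n:ℝ)+1)*A^2 := by linarith only [e5]
  linarith [hdesc, t1, t2]
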